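/- Freshness of learnt clauses under eager unit propagation and minimal backjumping: in the transition system →f (decide with no unit clause available, unitPropagate, conflict, explain, backjumpLearn to minimal backjump levels, restart), if s₀ is the initial state for F₀, s₀ →f* s_A, and the backjumpLearn rule applies in s_A = (M_A, Fl_A, C_A, ⊤, lnt_A), then the learnt clause C_A does not already occur in F₀ @ Fl_A. -/

import Mathlib

namespace SatFormal

/-- Propositional literals: positive or negative variables (variables are naturals). -/
inductive Literal where
  | Pos : Nat → Literal
  | Neg : Nat → Literal
deriving DecidableEq, Repr

/-- The variable of a literal. -/
def Literal.var : Literal → Nat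
  | .Pos n => n
  | .Neg n => n

/-- The opposite literal. -/
def Literal.opp : Literal → Literal
  | .Pos n => .Neg n
  | .Neg n => .Pos n

abbrev Clause := List Literal
abbrev Formula := List Clause
/-- A trail is a list of annotated literals: (literal, decision flag). -/
abbrev Trail := List (Literal × Bool)

/-- Underlying literals of a trail. -/
def elements (M : Trail) : List Literal := M.map Prod.fst
/-- Decision literals of a trail. -/
def decisions (M : Trail) : List Literal := (M.filter (fun a => a.2)).map Prod.fst
/-- Number of decision literals. -/
def currentLevel (M : Trail) : Nat := (M.filter (fun a => a.2)).length

/-- Prefix of the trail up to and including the first occurrence of literal `l`. -/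
def prefixTo (l : Literal) (M : Trail) : Trail :=
  M.takeWhile (fun a => decide (a.1 ≠ l)) ++ (M.dropWhile (fun a => decide (a.1 ≠ l))).take 1

/-- Decision literals preceding the first occurrence of `l` (including `l` if it is one). -/
def decisionsTo (l : Literal) (M : Trail) : List Literal := decisions (prefixTo l M)

/-- Decision level of a literal in a trail. -/
def levelOf (l : Literal) (M : Trail) : Nat := (decisionsTo l M).length

/-- Longest prefix of the trail containing only elements of level ≤ `lv`. -/
def prefixToLevel (lv : Nat) : Trail → Trail
  | [] => []
  | a :: M =>
      if a.2 then (if 0 < lv then a :: prefixToLevel (lv - 1) M else [])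
      else a :: prefixToLevel lv M

/-- The last decision literal of a trail (default `Pos 0` when there is none). -/
def lastDecision (M : Trail) : Literal := (decisions M).getLastD (Literal.Pos 0)

/-- The prefix of the trail before its last decision literal. -/
def prefixBeforeLastDecision (M : Trail) : Trail :=
  ((M.reverse.dropWhile (fun a => !a.2)).tail).reverse

/-- A clause is true in a valuation. -/
def clauseTrue (v : List Literal) (c : Clause) : Prop := ∃ l ∈ c, l ∈ v
/-- A formula is true in a valuation. -/
def formulaTrue (v : List Literal) (F : Formula) : Prop := ∀ c ∈ F, clauseTrue v c
/-- A clause is false in a valuation. -/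
def clauseFalse (v : List Literal) (c : Clause) : Prop := ∀ l ∈ c, l.opp ∈ v
/-- A formula is false in a valuation. -/
def formulaFalse (v : List Literal) (F : Formula) : Prop := ∃ c ∈ F, clauseFalse v c
/-- Consistency of a valuation. -/
def consistent (v : List Literal) : Prop := ¬ ∃ l, l ∈ v ∧ Literal.opp l ∈ v
/-- A model of a formula. -/
def isModel (v : List Literal) (F : Formula) : Prop := consistent v ∧ formulaTrue v F
/-- Satisfiability. -/
def sat (F : Formula) : Prop := ∃ v, isModel v F
/-- A formula entails a clause. -/
def entailsClause (F : Formula) (c : Clause) : Prop := ∀ v, isModel v F → clauseTrue v c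
/-- A formula entails a literal. -/
def entailsLit (F : Formula) (l : Literal) : Prop := ∀ v, isModel v F → l ∈ v
/-- Logical equivalence of formulae. -/
def equivFormula (F1 F2 : Formula) : Prop := ∀ v, isModel v F1 ↔ isModel v F2

/-- Variables of a formula. -/
def varsF (F : Formula) : Set Nat := {n | ∃ c ∈ F, ∃ l ∈ c, Literal.var l = n}
/-- Variables of a valuation. -/
def varsV (v : List Literal) : Set Nat := {n | ∃ l ∈ v, Literal.var l = n}
/-- Variables of a trail. -/
def varsT (M : Trail) : Set Nat := varsV (elements M)

/-- The formula of unit clauses corresponding to a list of literals. -/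
def valToForm (v : List Literal) : Formula := v.map (fun l => [l])

/-- A clause is unit in a valuation with unit literal `l`. -/
def isUnit (c : Clause) (l : Literal) (v : List Literal) : Prop :=
  l ∈ c ∧ l ∉ v ∧ l.opp ∉ v ∧ ∀ l' ∈ c, l' ≠ l → Literal.opp l' ∈ v

/-- `a` precedes `b` in the list `v` (first positions compared). -/
def precedes (a b : Literal) (v : List Literal) : Prop :=
  a ∈ v ∧ b ∈ v ∧ v.idxOf a < v.idxOf b

/-- A clause `c` is a reason for propagation of `l` in valuation `v`. -/
def isReason (c : Clause) (l : Literal) (v : List Literal) : Prop :=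
  l ∈ c ∧ l ∈ v ∧ ∀ l' ∈ c, l' ≠ l → Literal.opp l' ∈ v ∧ precedes (Literal.opp l') l v

/-- `l` is the literal of `c` asserted last in `v`. -/
def isLastAsserted (l : Literal) (c : List Literal) (v : List Literal) : Prop :=
  l ∈ c ∧ l ∈ v ∧ ∀ l' ∈ c, l' ∈ v → l' = l ∨ precedes l' l v

/-- The list of opposites of the literals of a clause. -/
def oppC (c : Clause) : List Literal := c.map Literal.opp

/-- `lv` is a backjump level for literal `l` and clause `c` w.r.t. trail `M`. -/
def isBackjumpLevel (lv : Nat) (l : Literal) (c : Clause) (M : Trail) : Prop :=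
  clauseFalse (elements M) c ∧ isLastAsserted l.opp (oppC c) (elements M) ∧
  lv < levelOf l.opp M ∧ ∀ l' ∈ c, l' ≠ l → levelOf (Literal.opp l') M ≤ lv

/-- Minimal backjump level. -/
def isMinimalBackjumpLevel (lv : Nat) (l : Literal) (c : Clause) (M : Trail) : Prop :=
  isBackjumpLevel lv l c M ∧ ∀ lv' < lv, ¬ isBackjumpLevel lv' l c M

/-- Unique implication point condition. -/
def isUIP (l : Literal) (c : Clause) (M : Trail) : Prop :=
  clauseFalse (elements M) c ∧ isLastAsserted l.opp (oppC c) (elements M) ∧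
  ∀ l' ∈ c, l' ≠ l → levelOf (Literal.opp l') M < levelOf l.opp M

/-- Resolution of clauses `C` and `c` over the literal `l`. -/
def resolve (C c : Clause) (l : Literal) : Clause :=
  C.filter (fun x => decide (x ≠ l)) ++ c.filter (fun x => decide (x ≠ l.opp))

/-- Lexicographic extension of a relation to lists. -/
def lexExt {X : Type _} (r : X → X → Prop) (s t : List X) : Prop :=
  (∃ rr, s = t ++ rr ∧ rr ≠ []) ∨
  (∃ rr s' t' a b, s = rr ++ a :: s' ∧ t = rr ++ b :: t' ∧ r a b)

/-- Ordering on annotated literals: decisions are greater than non-decisions. -/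
def litSucc (a b : Literal × Bool) : Prop := a.2 = true ∧ b.2 = false

/-- Trail ordering: lexicographic extension of `litSucc`. -/
def trailSucc : Trail → Trail → Prop := lexExt litSucc

/-- One step of the multiset extension of a relation. -/
def multExtStep {α : Type _} (r : α → α → Prop) (S1 S2 : Multiset α) : Prop :=
  ∃ (S S2' : Multiset α) (s1 : α), S1 = S + {s1} ∧ S2 = S + S2' ∧ ∀ s2 ∈ S2', r s1 s2

/-- Multiset extension: transitive closure of `multExtStep`. -/
def multExt {α : Type _} (r : α → α → Prop) : Multiset α → Multiset α → Prop :=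
  Relation.TransGen (multExtStep r)

/-- Clause ordering induced by a trail `M` (as a list of literals). -/
def clauseSucc (M : List Literal) (C1 C2 : Clause) : Prop :=
  multExt (fun a b => precedes a b M)
    ((oppC C2).dedup : Multiset Literal) ((oppC C1).dedup : Multiset Literal)

/-! ## Basic DPLL system -/

abbrev DState := Trail × Formula

def decideR (DecVars : Set Nat) (s1 s2 : DState) : Prop :=
  ∃ l : Literal, l.var ∈ DecVars ∧ l ∉ elements s1.1 ∧ l.opp ∉ elements s1.1 ∧
    s2.1 = s1.1 ++ [(l, true)] ∧ s2.2 = s1.2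

def unitPropagateR (s1 s2 : DState) : Prop :=
  ∃ c l, c ∈ s1.2 ∧ isUnit c l (elements s1.1) ∧
    s2.1 = s1.1 ++ [(l, false)] ∧ s2.2 = s1.2

def backtrackR (s1 s2 : DState) : Prop :=
  formulaFalse (elements s1.1) s1.2 ∧ decisions s1.1 ≠ [] ∧
  s2.1 = prefixBeforeLastDecision s1.1 ++ [((lastDecision s1.1).opp, false)] ∧ s2.2 = s1.2

def stepD (DecVars : Set Nat) (s1 s2 : DState) : Prop :=
  unitPropagateR s1 s2 ∨ backtrackR s1 s2 ∨ decideR DecVars s1 s2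

def accepting (DecVars : Set Nat) (s : DState) : Prop :=
  ¬ formulaFalse (elements s.1) s.2 ∧
  ¬ ∃ l : Literal, l.var ∈ DecVars ∧ l ∉ elements s.1 ∧ l.opp ∉ elements s.1

def rejecting (s : DState) : Prop :=
  formulaFalse (elements s.1) s.2 ∧ decisions s.1 = []

/-! ## Conflict analysis system -/

abbrev CState := Trail × Formula × Clause × Bool

def c_decide (DecVars : Set Nat) : CState → CState → Prop :=
  fun (M1, F1, C1, b1) (M2, F2, C2, b2) =>
    (∃ l : Literal, l.var ∈ DecVars ∧ l ∉ elements M1 ∧ l.opp ∉ elements M1 ∧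
      M2 = M1 ++ [(l, true)]) ∧ F2 = F1 ∧ C2 = C1 ∧ b2 = b1

def c_unitPropagate (Vars : Set Nat) : CState → CState → Prop :=
  fun (M1, F1, C1, b1) (M2, F2, C2, b2) =>
    (∃ (c : Clause) (l : Literal), entailsClause F1 c ∧ l.var ∈ Vars ∧
      isUnit c l (elements M1) ∧ M2 = M1 ++ [(l, false)]) ∧
    F2 = F1 ∧ C2 = C1 ∧ b2 = b1

def c_conflict : CState → CState → Prop :=
  fun (M1, F1, C1, b1) (M2, F2, C2, b2) =>
    b1 = false ∧ (∃ c : Clause, entailsClause F1 c ∧ clauseFalse (elements M1) c ∧ C2 = c) ∧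
    M2 = M1 ∧ F2 = F1 ∧ b2 = true ∧ C1 = C1

def c_explain : CState → CState → Prop :=
  fun (M1, F1, C1, b1) (M2, F2, C2, b2) =>
    b1 = true ∧ (∃ (l : Literal) (c : Clause), l ∈ C1 ∧ isReason c l.opp (elements M1) ∧
      entailsClause F1 c ∧ C2 = resolve C1 c l) ∧
    M2 = M1 ∧ F2 = F1 ∧ b2 = true

def c_backjump : CState → CState → Prop :=
  fun (M1, F1, C1, b1) (M2, F2, C2, b2) =>
    b1 = true ∧ (∃ (l : Literal) (lv : Nat), isBackjumpLevel lv l C1 M1 ∧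
      M2 = prefixToLevel lv M1 ++ [(l, false)]) ∧
    F2 = F1 ∧ C2 = [] ∧ b2 = false

def c_learn : CState → CState → Prop :=
  fun (M1, F1, C1, b1) (M2, F2, C2, b2) =>
    b1 = true ∧ C1 ∉ F1 ∧ M2 = M1 ∧ F2 = F1 ++ [C1] ∧ C2 = C1 ∧ b2 = b1

def stepC (F0 : Formula) (DecVars : Set Nat) (s1 s2 : CState) : Prop :=
  c_decide DecVars s1 s2 ∨ c_unitPropagate (varsF F0 ∪ DecVars) s1 s2 ∨
  c_conflict s1 s2 ∨ c_explain s1 s2 ∨ c_backjump s1 s2 ∨ c_learn s1 s2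

/-! ## System with restarts and forgetting -/

abbrev RState := Trail × Formula × Clause × Bool × Bool

def r_decide (F0 : Formula) (DecVars : Set Nat) : RState → RState → Prop :=
  fun (M1, Fl1, C1, cf1, ln1) (M2, Fl2, C2, cf2, ln2) =>
    (∃ l : Literal, l.var ∈ DecVars ∧ l ∉ elements M1 ∧ l.opp ∉ elements M1 ∧
      M2 = M1 ++ [(l, true)]) ∧
    (¬ ∃ (c : Clause) (l : Literal), c ∈ F0 ++ Fl1 ∧ isUnit c l (elements M1)) ∧
    Fl2 = Fl1 ∧ C2 = C1 ∧ cf2 = cf1 ∧ ln2 = ln1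

def r_unitPropagate (F0 : Formula) : RState → RState → Prop :=
  fun (M1, Fl1, C1, cf1, ln1) (M2, Fl2, C2, cf2, ln2) =>
    (∃ (c : Clause) (l : Literal), c ∈ F0 ++ Fl1 ∧ isUnit c l (elements M1) ∧
      M2 = M1 ++ [(l, false)]) ∧
    Fl2 = Fl1 ∧ C2 = C1 ∧ cf2 = cf1 ∧ ln2 = ln1

def r_conflict (F0 : Formula) : RState → RState → Prop :=
  fun (M1, Fl1, C1, cf1, ln1) (M2, Fl2, C2, cf2, ln2) =>
    cf1 = false ∧ (∃ c : Clause, c ∈ F0 ++ Fl1 ∧ clauseFalse (elements M1) c ∧ C2 = c) ∧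
    M2 = M1 ∧ Fl2 = Fl1 ∧ cf2 = true ∧ ln2 = ln1 ∧ C1 = C1

def r_explain (F0 : Formula) : RState → RState → Prop :=
  fun (M1, Fl1, C1, cf1, ln1) (M2, Fl2, C2, cf2, ln2) =>
    cf1 = true ∧ (∃ (l : Literal) (c : Clause), l ∈ C1 ∧ isReason c l.opp (elements M1) ∧
      c ∈ F0 ++ Fl1 ∧ C2 = resolve C1 c l) ∧
    M2 = M1 ∧ Fl2 = Fl1 ∧ cf2 = true ∧ ln2 = ln1

def r_backjumpLearn : RState → RState → Prop :=
  fun (M1, Fl1, C1, cf1, _ln1) (M2, Fl2, C2, cf2, ln2) =>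
    cf1 = true ∧ (∃ (l : Literal) (lv : Nat), isMinimalBackjumpLevel lv l C1 M1 ∧
      M2 = prefixToLevel lv M1 ++ [(l, false)]) ∧
    Fl2 = Fl1 ++ [C1] ∧ C2 = [] ∧ cf2 = false ∧ ln2 = true

def r_forget : RState → RState → Prop :=
  fun (M1, Fl1, C1, cf1, ln1) (M2, Fl2, C2, cf2, ln2) =>
    cf1 = false ∧ ln1 = true ∧
    (∃ Fc : Formula, (∀ c ∈ Fc, c ∈ Fl1) ∧
      (∀ c ∈ Fc, ¬ ∃ l : Literal, isReason c l (elements M1)) ∧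
      Fl2 = Fl1.filter (fun c => decide (c ∉ Fc))) ∧
    M2 = M1 ∧ C2 = C1 ∧ cf2 = cf1 ∧ ln2 = false

def r_restart : RState → RState → Prop :=
  fun (M1, Fl1, C1, cf1, ln1) (M2, Fl2, C2, cf2, ln2) =>
    cf1 = false ∧ ln1 = true ∧
    M2 = prefixToLevel 0 M1 ∧ Fl2 = Fl1 ∧ C2 = C1 ∧ cf2 = cf1 ∧ ln2 = false

/-- The system without `forget` (with `restart`). -/
def stepF (F0 : Formula) (DecVars : Set Nat) (s1 s2 : RState) : Prop :=
  r_decide F0 DecVars s1 s2 ∨ r_unitPropagate F0 s1 s2 ∨ r_conflict F0 s1 s2 ∨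
  r_explain F0 s1 s2 ∨ r_backjumpLearn s1 s2 ∨ r_restart s1 s2

/-- The full system with both `restart` and `forget`. -/
def stepAll (F0 : Formula) (DecVars : Set Nat) (s1 s2 : RState) : Prop :=
  stepF F0 DecVars s1 s2 ∨ r_forget s1 s2

/-- Normalization of a formula: remove duplicate literals and duplicate clauses. -/
def normF (F : Formula) : Formula := (F.map List.dedup).dedup

/-! ### Auxiliary lemmas for stmt18 -/

theorem Literal.opp_opp (l : Literal) : l.opp.opp = l := by cases l <;> rfl

theorem Literal.opp_inj {l m : Literal} (h : l.opp = m.opp) : l = m := by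
  cases l <;> cases m <;> simp [Literal.opp] at h <;> simp [h]

theorem Literal.opp_ne (l : Literal) : l.opp ≠ l := by
  cases l <;> simp [Literal.opp]

theorem elements_append (M N : Trail) : elements (M ++ N) = elements M ++ elements N :=
  List.map_append

theorem elements_cons (a : Literal × Bool) (M : Trail) :
    elements (a :: M) = a.1 :: elements M := rfl

theorem currentLevel_cons_true (x : Literal) (M : Trail) :
    currentLevel ((x, true) :: M) = 1 + currentLevel M := by
  simp [currentLevel, List.filter_cons]
  omega

theorem currentLevel_cons_false (x : Literal) (M : Trail) :
    currentLevel ((x, false) :: M) = currentLevel M := by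
  simp [currentLevel, List.filter_cons]

theorem currentLevel_singleton_true (l : Literal) : currentLevel [(l, true)] = 1 := rfl

theorem currentLevel_singleton_false (l : Literal) : currentLevel [(l, false)] = 0 := rfl

theorem currentLevel_append (M N : Trail) :
    currentLevel (M ++ N) = currentLevel M + currentLevel N := by
  simp [currentLevel, List.filter_append]

theorem prefixToLevel_cons_false (lv : Nat) (x : Literal) (M : Trail) :
    prefixToLevel lv ((x, false) :: M) = (x, false) :: prefixToLevel lv M := rfl

theorem prefixToLevel_cons_true_pos {lv : Nat} (h : 0 < lv) (x : Literal) (M : Trail) :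
    prefixToLevel lv ((x, true) :: M) = (x, true) :: prefixToLevel (lv - 1) M := by
  simp [prefixToLevel, h]

theorem prefixToLevel_cons_true_zero (x : Literal) (M : Trail) :
    prefixToLevel 0 ((x, true) :: M) = [] := rfl

theorem prefixToLevel_prefix (lv : Nat) (M : Trail) : prefixToLevel lv M <+: M := by
  induction M generalizing lv with
  | nil => simp [prefixToLevel]
  | cons a M ih =>
    obtain ⟨x, b⟩ := a
    cases b
    · rw [prefixToLevel_cons_false]
      exact List.cons_prefix_cons.mpr ⟨rfl, ih lv⟩
    · by_cases h0 : 0 < lv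
      · rw [prefixToLevel_cons_true_pos h0]
        exact List.cons_prefix_cons.mpr ⟨rfl, ih (lv - 1)⟩
      · have : lv = 0 := by omega
        subst this
        rw [prefixToLevel_cons_true_zero]
        exact List.nil_prefix

theorem elements_prefixToLevel_subset (lv : Nat) (M : Trail) :
    elements (prefixToLevel lv M) ⊆ elements M :=
  fun _ hx => ((prefixToLevel_prefix lv M).sublist.map Prod.fst).subset hx

theorem currentLevel_prefixToLevel (lv : Nat) (M : Trail) :
    currentLevel (prefixToLevel lv M) = min lv (currentLevel M) := by
  induction M generalizing lv with
  | nil => simp [prefixToLevel, currentLevel]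
  | cons a M ih =>
    obtain ⟨x, b⟩ := a
    cases b
    · rw [prefixToLevel_cons_false, currentLevel_cons_false, currentLevel_cons_false, ih]
    · by_cases h0 : 0 < lv
      · rw [prefixToLevel_cons_true_pos h0, currentLevel_cons_true, currentLevel_cons_true, ih]
        omega
      · have : lv = 0 := by omega
        subst this
        rw [prefixToLevel_cons_true_zero, currentLevel_cons_true]
        simp [currentLevel]

theorem prefixToLevel_append_of_lt {lv : Nat} {M : Trail} (h : lv < currentLevel M)
    (N : Trail) : prefixToLevel lv (M ++ N) = prefixToLevel lv M := by
  induction M generalizing lv with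
  | nil => simp [currentLevel] at h
  | cons a M ih =>
    obtain ⟨x, b⟩ := a
    rw [List.cons_append]
    cases b
    · rw [currentLevel_cons_false] at h
      rw [prefixToLevel_cons_false, prefixToLevel_cons_false, ih h]
    · rw [currentLevel_cons_true] at h
      by_cases h0 : 0 < lv
      · rw [prefixToLevel_cons_true_pos h0, prefixToLevel_cons_true_pos h0, ih (by omega)]
      · have : lv = 0 := by omega
        subst this
        rw [prefixToLevel_cons_true_zero, prefixToLevel_cons_true_zero]

theorem prefixToLevel_append_decision (M : Trail) (l : Literal) :
    prefixToLevel (currentLevel M) (M ++ [(l, true)]) = M := by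
  induction M with
  | nil => simp [prefixToLevel, currentLevel]
  | cons a M ih =>
    obtain ⟨x, b⟩ := a
    rw [List.cons_append]
    cases b
    · rw [currentLevel_cons_false, prefixToLevel_cons_false, ih]
    · rw [currentLevel_cons_true, prefixToLevel_cons_true_pos (by omega)]
      have h1 : 1 + currentLevel M - 1 = currentLevel M := by omega
      rw [h1, ih]

theorem prefixToLevel_prefixToLevel {k lv : Nat} (h : k ≤ lv) (M : Trail) :
    prefixToLevel k (prefixToLevel lv M) = prefixToLevel k M := by
  induction M generalizing k lv with
  | nil => simp [prefixToLevel]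
  | cons a M ih =>
    obtain ⟨x, b⟩ := a
    cases b
    · rw [prefixToLevel_cons_false, prefixToLevel_cons_false, prefixToLevel_cons_false, ih h]
    · by_cases h0 : 0 < lv
      · rw [prefixToLevel_cons_true_pos h0]
        by_cases hk0 : 0 < k
        · rw [prefixToLevel_cons_true_pos hk0, prefixToLevel_cons_true_pos hk0,
            ih (by omega)]
        · have : k = 0 := by omega
          subst this
          rw [prefixToLevel_cons_true_zero, prefixToLevel_cons_true_zero]
      · have hlv : lv = 0 := by omega
        have hk : k = 0 := by omega
        subst hk; subst hlv
        rw [prefixToLevel_cons_true_zero]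
        rfl

theorem levelOf_cons (x : Literal) (a : Literal × Bool) (M : Trail) :
    levelOf x (a :: M) =
      if a.1 = x then (if a.2 then 1 else 0) else (if a.2 then 1 else 0) + levelOf x M := by
  unfold levelOf decisionsTo prefixTo decisions
  by_cases h : a.1 = x
  · simp [h, List.takeWhile_cons, List.dropWhile_cons]
    by_cases ha : a.2 <;> simp [List.filter_cons, ha]
  · have hp : (decide (a.1 ≠ x)) = true := by simp [h]
    simp only [h, if_false, List.takeWhile_cons, List.dropWhile_cons, hp, if_true,
      List.cons_append]
    by_cases ha : a.2 <;> simp [List.filter_cons, ha] <;> omega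

theorem mem_prefixToLevel_iff {x : Literal} {M : Trail} (hx : x ∈ elements M) (lv : Nat) :
    x ∈ elements (prefixToLevel lv M) ↔ levelOf x M ≤ lv := by
  induction M generalizing lv with
  | nil => simp [elements] at hx
  | cons a M ih =>
    obtain ⟨y, b⟩ := a
    rw [levelOf_cons]
    by_cases h : y = x
    · simp only [h, if_true]
      cases b
      · rw [prefixToLevel_cons_false, elements_cons]
        simp [h]
      · by_cases h0 : 0 < lv
        · rw [prefixToLevel_cons_true_pos h0, elements_cons]
          simp [h]
          omega
        · have : lv = 0 := by omega
          subst this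
          rw [prefixToLevel_cons_true_zero]
          simp [elements]
    · have hx' : x ∈ elements M := by
        rw [elements_cons] at hx
        rcases List.mem_cons.mp hx with h1 | h1
        · exact absurd h1.symm h
        · exact h1
      simp only [show ((y, b) : Literal × Bool).1 = y from rfl, h, if_false]
      cases b
      · rw [prefixToLevel_cons_false, elements_cons, List.mem_cons]
        simp only [show ((y, false) : Literal × Bool).2 = false from rfl, Bool.false_eq_true,
          if_false, Nat.zero_add]
        constructor
        · rintro (h1 | h1)
          · exact absurd h1.symm h
          · exact (ih hx' lv).mp h1
        · intro h1
          exact Or.inr ((ih hx' lv).mpr h1)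
      · simp only [show ((y, true) : Literal × Bool).2 = true from rfl, if_true]
        by_cases h0 : 0 < lv
        · rw [prefixToLevel_cons_true_pos h0, elements_cons, List.mem_cons]
          constructor
          · rintro (h1 | h1)
            · exact absurd h1.symm h
            · have := (ih hx' (lv - 1)).mp h1
              omega
          · intro h1
            exact Or.inr ((ih hx' (lv - 1)).mpr (by omega))
        · have : lv = 0 := by omega
          subst this
          rw [prefixToLevel_cons_true_zero]
          simp [elements]

theorem prefixTo_sublist (l : Literal) (M : Trail) : List.Sublist (prefixTo l M) M := by
  have hpre : prefixTo l M <+: (List.takeWhile (fun a => decide (a.1 ≠ l)) M ++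
      List.dropWhile (fun a => decide (a.1 ≠ l)) M) := by
    unfold prefixTo
    exact (List.prefix_append_right_inj _).mpr (List.take_prefix _ _)
  rw [List.takeWhile_append_dropWhile] at hpre
  exact hpre.sublist

theorem levelOf_le_currentLevel (l : Literal) (M : Trail) :
    levelOf l M ≤ currentLevel M := by
  unfold levelOf decisionsTo decisions currentLevel
  rw [List.length_map]
  exact ((prefixTo_sublist l M).filter _).length_le

theorem consistent_subset {v w : List Literal} (h : v ⊆ w) (hw : consistent w) :
    consistent v := fun ⟨l, h1, h2⟩ => hw ⟨l, h h1, h h2⟩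

theorem consistent_snoc {v : List Literal} {l : Literal} (hv : consistent v)
    (h1 : l ∉ v) (h2 : l.opp ∉ v) : consistent (v ++ [l]) := by
  rintro ⟨x, hx, hxo⟩
  simp only [List.mem_append, List.mem_singleton] at hx hxo
  rcases hx with hx | hx <;> rcases hxo with hxo | hxo
  · exact hv ⟨x, hx, hxo⟩
  · have : x = l.opp := by rw [← Literal.opp_opp x, hxo]
    exact h2 (this ▸ hx)
  · exact h2 (hx ▸ hxo)
  · rw [hx] at hxo
    exact Literal.opp_ne l hxo

theorem mem_of_oppC {l : Literal} {C : Clause} (h : l.opp ∈ oppC C) : l ∈ C := by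
  rcases List.mem_map.mp h with ⟨y, hy, hyo⟩
  rwa [Literal.opp_inj hyo] at hy

theorem unit_of_backjumpLevel {lv : Nat} {l : Literal} {C : Clause} {M : Trail}
    (h : isBackjumpLevel lv l C M) (hcons : consistent (elements M)) :
    isUnit C l (elements (prefixToLevel lv M)) := by
  obtain ⟨hfalse, hlast, hlt, hother⟩ := h
  have hlC : l ∈ C := mem_of_oppC hlast.1
  have hloppM : l.opp ∈ elements M := hfalse l hlC
  have hlnM : l ∉ elements M := fun hl => hcons ⟨l, hl, hloppM⟩
  refine ⟨hlC, ?_, ?_, ?_⟩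
  · exact fun hl => hlnM (elements_prefixToLevel_subset lv M hl)
  · intro hl
    have := (mem_prefixToLevel_iff hloppM lv).mp hl
    omega
  · intro l' hl' hne
    exact (mem_prefixToLevel_iff (hfalse l' hl') lv).mpr (hother l' hl' hne)

theorem no_unit_below_minimal {lv : Nat} {l : Literal} {C : Clause} {M : Trail}
    (h : isMinimalBackjumpLevel lv l C M) {k : Nat} (hk : k < lv) (l'' : Literal) :
    ¬ isUnit C l'' (elements (prefixToLevel k M)) := by
  obtain ⟨⟨hfalse, hlast, hlt, hother⟩, hmin⟩ := h
  have hlC : l ∈ C := mem_of_oppC hlast.1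
  have h0 : 0 < lv := by omega
  have hnb := hmin (lv - 1) (by omega)
  have hex : ∃ l' ∈ C, l' ≠ l ∧ lv ≤ levelOf l'.opp M := by
    by_contra hcon
    push_neg at hcon
    exact hnb ⟨hfalse, hlast, by omega, fun l' hl' hne => by
      have := hcon l' hl' hne; omega⟩
  obtain ⟨l', hl'C, hl'ne, hl'lv⟩ := hex
  rintro ⟨_, hnin, _, hopp⟩
  by_cases heq : l'' = l
  · subst heq
    have h1 := hopp l' hl'C hl'ne
    have := (mem_prefixToLevel_iff (hfalse l' hl'C) k).mp h1
    omega
  · have h1 := hopp l hlC (fun hll => heq hll.symm)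
    have := (mem_prefixToLevel_iff (hfalse l hlC) k).mp h1
    omega

/-- The freshness invariant: the trail is consistent and no clause of the current
formula is unit in a strict-level prefix of the trail. -/
def Inv18 (F0 : Formula) (M : Trail) (Fl : Formula) : Prop :=
  consistent (elements M) ∧
  ∀ k, k < currentLevel M → ∀ c ∈ F0 ++ Fl, ∀ l, ¬ isUnit c l (elements (prefixToLevel k M))

theorem inv_step (F0 : Formula) (DecVars : Set Nat) (s t : RState)
    (hst : stepF F0 DecVars s t) (h : Inv18 F0 s.1 s.2.1) : Inv18 F0 t.1 t.2.1 := by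
  obtain ⟨M1, Fl1, C1, cf1, ln1⟩ := s
  obtain ⟨M2, Fl2, C2, cf2, ln2⟩ := t
  obtain ⟨hcons, hnu⟩ := h
  rcases hst with hd | hp | hc | he | hb | hr
  · -- decide
    obtain ⟨⟨l, _, hlno, hlopno, hM2⟩, hnounit, hFl, -, -, -⟩ := hd
    subst hM2; subst hFl
    constructor
    · rw [elements_append]
      exact consistent_snoc hcons hlno hlopno
    · intro k hk c hc l' hu
      rw [currentLevel_append, currentLevel_singleton_true] at hk
      by_cases hklt : k < currentLevel M1
      · rw [prefixToLevel_append_of_lt hklt] at hu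
        exact hnu k hklt c hc l' hu
      · have hkeq : k = currentLevel M1 := by omega
        subst hkeq
        rw [prefixToLevel_append_decision] at hu
        exact hnounit ⟨c, l', hc, hu⟩
  · -- unitPropagate
    obtain ⟨⟨c, l, hc, hu, hM2⟩, hFl, -, -, -⟩ := hp
    subst hM2; subst hFl
    constructor
    · rw [elements_append]
      exact consistent_snoc hcons hu.2.1 hu.2.2.1
    · intro k hk c' hc' l' hu'
      rw [currentLevel_append, currentLevel_singleton_false] at hk
      have hk' : k < currentLevel M1 := by omega
      rw [prefixToLevel_append_of_lt hk'] at hu'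
      exact hnu k hk' c' hc' l' hu'
  · -- conflict
    obtain ⟨-, -, hM2, hFl, -, -, -⟩ := hc
    subst hM2; subst hFl
    exact ⟨hcons, hnu⟩
  · -- explain
    obtain ⟨-, -, hM2, hFl, -, -⟩ := he
    subst hM2; subst hFl
    exact ⟨hcons, hnu⟩
  · -- backjumpLearn
    obtain ⟨-, ⟨l, lv, hmbl, hM2⟩, hFl, -, -, -⟩ := hb
    subst hM2; subst hFl
    obtain ⟨hfalse, hlast, hlt, hother⟩ := hmbl.1
    have hlC : l ∈ C1 := mem_of_oppC hlast.1
    have hloppM : l.opp ∈ elements M1 := hfalse l hlC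
    have hlvcur : lv < currentLevel M1 :=
      lt_of_lt_of_le hlt (levelOf_le_currentLevel _ _)
    have hlnM : l ∉ elements M1 := fun hl => hcons ⟨l, hl, hloppM⟩
    have hcurP : currentLevel (prefixToLevel lv M1) = lv := by
      rw [currentLevel_prefixToLevel]; omega
    constructor
    · rw [elements_append]
      refine consistent_snoc
        (consistent_subset (elements_prefixToLevel_subset lv M1) hcons) ?_ ?_
      · exact fun hl => hlnM (elements_prefixToLevel_subset lv M1 hl)
      · intro hl
        have := (mem_prefixToLevel_iff hloppM lv).mp hl
        omega
    · intro k hk c hc l' hu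
      rw [currentLevel_append, currentLevel_singleton_false, hcurP] at hk
      rw [prefixToLevel_append_of_lt (by omega : k < currentLevel (prefixToLevel lv M1)),
        prefixToLevel_prefixToLevel (by omega : k ≤ lv)] at hu
      rw [← List.append_assoc] at hc
      rcases List.mem_append.mp hc with hc | hc
      · exact hnu k (show k < currentLevel M1 by omega) c hc l' hu
      · rw [List.mem_singleton] at hc
        subst hc
        exact no_unit_below_minimal hmbl (by omega) l' hu
  · -- restart
    obtain ⟨-, -, hM2, hFl, -, -, -⟩ := hr
    subst hM2; subst hFl
    constructor
    · exact consistent_subset (elements_prefixToLevel_subset 0 M1) hcons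
    · intro k hk
      rw [currentLevel_prefixToLevel] at hk
      omega

theorem inv_reach (F0 : Formula) (DecVars : Set Nat) (s : RState)
    (h : Relation.ReflTransGen (stepF F0 DecVars) ([], [], [], false, false) s) :
    Inv18 F0 s.1 s.2.1 := by
  induction h with
  | refl =>
    constructor
    · rintro ⟨l, hl, -⟩
      simp [elements] at hl
    · intro k hk
      simp [currentLevel] at hk
  | tail _ hstep ih => exact inv_step _ _ _ _ hstep ih

/-- in the system without forget, learnt clauses are always fresh. -/
theorem stmt18 (F0 : Formula) (DecVars : Set Nat)
    (MA : Trail) (FlA : Formula) (CA : Clause) (lntA : Bool)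
    (hreach : Relation.ReflTransGen (stepF F0 DecVars)
      ([], [], [], false, false) (MA, FlA, CA, true, lntA))
    (happ : ∃ sB, r_backjumpLearn (MA, FlA, CA, true, lntA) sB) :
    CA ∉ F0 ++ FlA := by
  intro hmem
  have hinv := inv_reach F0 DecVars _ hreach
  obtain ⟨hcons, hnu⟩ := hinv
  obtain ⟨sB, hB⟩ := happ
  obtain ⟨MB, FlB, CB, cfB, lnB⟩ := sB
  obtain ⟨-, ⟨l, lv, hmbl, -⟩, -, -, -, -⟩ := hB
  have hbj := hmbl.1
  have hlvcur : lv < currentLevel MA :=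
    lt_of_lt_of_le hbj.2.2.1 (levelOf_le_currentLevel _ _)
  exact hnu lv hlvcur CA hmem l (unit_of_backjumpLevel hbj hcons)

end SatFormal
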